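/- The set {x ∈ X : H({x}) > 0} is a Borel set. -/
import Mathlib


open MeasureTheory Metric Set Filter Topology
open scoped ENNReal NNReal

noncomputable section

universe u

variable {X : Type u} [MetricSpace X] [MeasurableSpace X]

/-- The doubling condition: `0 < μ(B(x,2r)) ≤ C_d · μ(B(x,r)) < ∞` for every ball. -/
def IsDoubling (μ : Measure X) (Cd : ℝ≥0∞) : Prop :=
  ∀ (x : X) (r : ℝ), 0 < r →
    0 < μ (ball x (2 * r)) ∧ μ (ball x (2 * r)) ≤ Cd * μ (ball x r) ∧
      Cd * μ (ball x r) < ⊤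

/-- The codimension-one restricted Hausdorff content `H_R(A)`. -/
def codimHContent (μ : Measure X) (R : ℝ) (A : Set X) : ℝ≥0∞ :=
  ⨅ (c : ℕ → X × ℝ) (_ : A ⊆ ⋃ i, ball (c i).1 (c i).2) (_ : ∀ i, (c i).2 ≤ R),
    ∑' i, μ (ball (c i).1 (c i).2) / ENNReal.ofReal (c i).2

/-- The codimension-one Hausdorff measure `H(A) = lim_{R→0} H_R(A)`. -/
def codimH (μ : Measure X) (A : Set X) : ℝ≥0∞ :=
  ⨆ (R : ℝ) (_ : 0 < R), codimHContent μ R A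

/-- The restricted maximal function `M_R ν(x) = sup_{0<r≤R} r·ν(B(x,r))/μ(B(x,r))`. -/
def maximalFn (μ ν : Measure X) (R : ℝ) (x : X) : ℝ≥0∞ :=
  ⨆ (r : ℝ) (_ : 0 < r) (_ : r ≤ R),
    ENNReal.ofReal r * ν (ball x r) / μ (ball x r)

/-- `|s - t|` for extended-real numbers, interpreted as `∞` whenever at least one of
`s`, `t` is infinite. -/
def eAbsDiff (s t : EReal) : ℝ≥0∞ :=
  if s = ⊤ ∨ s = ⊥ ∨ t = ⊤ ∨ t = ⊥ then ⊤
  else ENNReal.ofReal |s.toReal - t.toReal|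

/-- `g` is an upper gradient of `u` in `Ω`: `g` is a nonnegative Borel function, and for every
nonconstant rectifiable curve `γ` in `Ω` (represented through its 1-Lipschitz (arc-length-type)
parametrizations on compact intervals) with endpoints `x,y` we have
`|u(x) - u(y)| ≤ ∫_γ g ds`. -/
def IsUpperGradientOn (g : X → ℝ≥0∞) (u : X → EReal) (Ω : Set X) : Prop :=
  Measurable g ∧
    ∀ (a b : ℝ), a ≤ b → ∀ γ : ℝ → X, LipschitzOnWith 1 γ (Set.Icc a b) →
      (∀ t ∈ Set.Icc a b, γ t ∈ Ω) →
      (∃ s ∈ Set.Icc a b, γ s ≠ γ a) →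
      eAbsDiff (u (γ a)) (u (γ b)) ≤ ∫⁻ t in Set.Icc a b, g (γ t)

/-- The Newtonian `N^{1,1}` (extended) norm:
`‖u‖_{N^{1,1}} = ‖u‖_{L¹} + inf ‖g‖_{L¹}` over upper gradients `g` of `u`. -/
def eN11 (μ : Measure X) (u : X → ℝ) : ℝ≥0∞ :=
  (∫⁻ x, ENNReal.ofReal |u x| ∂μ) +
    ⨅ (g : X → ℝ≥0∞) (_ : IsUpperGradientOn g (fun x => (u x : EReal)) Set.univ),
      ∫⁻ x, g x ∂μ

/-- The 1-capacity `capa₁(A) = inf ‖u‖_{N^{1,1}(X)}` over `u ∈ N^{1,1}(X)` with `u ≥ 1` on `A`. -/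
def capa1 (μ : Measure X) (A : Set X) : ℝ≥0∞ :=
  ⨅ (u : X → ℝ) (_ : ∀ x ∈ A, 1 ≤ u x), eN11 μ u

/-- The variational 1-capacity `rcapa₁(A,D) = inf ∫_X g_u dμ` over `u ∈ N^{1,1}(X)` with
`u ≥ 1` on `A` and `u = 0` on `X ∖ D`, and upper gradients `g_u` of `u`. -/
def rcapa1 (μ : Measure X) (A D : Set X) : ℝ≥0∞ :=
  ⨅ (u : X → ℝ) (_ : eN11 μ u < ⊤) (_ : ∀ x ∈ A, 1 ≤ u x)
    (_ : ∀ x, x ∉ D → u x = 0)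
    (g : X → ℝ≥0∞) (_ : IsUpperGradientOn g (fun x => (u x : EReal)) Set.univ),
    ∫⁻ x, g x ∂μ

/-- The `(1,1)`-Poincaré inequality:
`⨍_{B(x,r)} |u - u_{B(x,r)}| dμ ≤ C_P · r · ⨍_{B(x,λr)} g dμ`. -/
def PoincareIneq (μ : Measure X) (CP : ℝ≥0∞) (lam : ℝ) : Prop :=
  ∀ (x : X) (r : ℝ), 0 < r → ∀ (u : X → ℝ) (g : X → ℝ≥0∞),
    LocallyIntegrable u μ →
    IsUpperGradientOn g (fun y => (u y : EReal)) Set.univ →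
    (∫⁻ y in ball x r, ENNReal.ofReal |u y - ⨍ z in ball x r, u z ∂μ| ∂μ) / μ (ball x r)
      ≤ CP * ENNReal.ofReal r *
        ((∫⁻ y in ball x (lam * r), g y ∂μ) / μ (ball x (lam * r)))

/-- `A` is 1-thin at `x`:
`lim_{r→0} r · rcapa₁(A ∩ B(x,r), B(x,2r)) / μ(B(x,r)) = 0`. -/
def OneThin (μ : Measure X) (A : Set X) (x : X) : Prop :=
  Tendsto (fun r : ℝ =>
      ENNReal.ofReal r * rcapa1 μ (A ∩ ball x r) (ball x (2 * r)) / μ (ball x r))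
    (𝓝[>] 0) (𝓝 0)

/-- The 1-base `b₁ A`: the set of points where `A` is 1-thick (not 1-thin). -/
def OneBase (μ : Measure X) (A : Set X) : Set X := {x | ¬ OneThin μ A x}

/-- `U` is 1-finely open if `X ∖ U` is 1-thin at every point of `U`. -/
def OneFinelyOpen (μ : Measure X) (U : Set X) : Prop := ∀ x ∈ U, OneThin μ Uᶜ x

/-- `U` is 1-quasiopen if for every `ε > 0` there is an open `G` with `capa₁(G) < ε`
such that `U ∪ G` is open. -/
def OneQuasiopen (μ : Measure X) (U : Set X) : Prop :=
  ∀ ε : ℝ, 0 < ε → ∃ G : Set X, IsOpen G ∧ capa1 μ G < ENNReal.ofReal ε ∧ IsOpen (U ∪ G)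

/-- The 1-fine closure of `D`: the smallest 1-finely closed set containing `D`. -/
def OneFineClosure (μ : Measure X) (D : Set X) : Set X :=
  ⋂₀ {F : Set X | D ⊆ F ∧ OneFinelyOpen μ Fᶜ}

/-- `u` is Lipschitz in every open set compactly contained in `Ω`. -/
def LipschitzLocOn (u : X → ℝ) (Ω : Set X) : Prop :=
  ∀ Ω' : Set X, IsOpen Ω' → IsCompact (closure Ω') → closure Ω' ⊆ Ω →
    ∃ K : ℝ≥0, LipschitzOnWith K u Ω'

/-- `v i → u` in `L¹_loc(Ω)`. -/
def TendstoL1Loc (μ : Measure X) (Ω : Set X) (v : ℕ → X → ℝ) (u : X → ℝ) : Prop :=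
  ∀ K : Set X, K ⊆ Ω → IsCompact K →
    Tendsto (fun i => ∫⁻ x in K, ENNReal.ofReal |v i x - u x| ∂μ) atTop (𝓝 0)

/-- The total variation `‖Du‖(Ω)` of `u` in `Ω`. -/
def totalVar (μ : Measure X) (u : X → ℝ) (Ω : Set X) : ℝ≥0∞ :=
  ⨅ (v : ℕ → X → ℝ) (g : ℕ → X → ℝ≥0∞)
    (_ : ∀ i, LipschitzLocOn (v i) Ω)
    (_ : ∀ i, IsUpperGradientOn (g i) (fun x => (v i x : EReal)) Ω)
    (_ : TendstoL1Loc μ Ω v u),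
    liminf (fun i => ∫⁻ x in Ω, g i x ∂μ) atTop

/-- The (extended) BV norm `‖u‖_{BV(X)} = ‖u‖_{L¹(X)} + ‖Du‖(X)`. -/
def eBV (μ : Measure X) (u : X → ℝ) : ℝ≥0∞ :=
  (∫⁻ x, ENNReal.ofReal |u x| ∂μ) + totalVar μ u Set.univ

/-- `u ∈ BV(X)`: `u ∈ L¹(X)` and `‖Du‖(X) < ∞`. -/
def MemBV (μ : Measure X) (u : X → ℝ) : Prop := eBV μ u < ⊤

/-- The BV-capacity `capa_BV(A) = inf ‖u‖_{BV(X)}` over `u ∈ BV(X)` with `u ≥ 1`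
in a neighborhood of `A`. -/
def capaBV (μ : Measure X) (A : Set X) : ℝ≥0∞ :=
  ⨅ (u : X → ℝ) (_ : ∃ V : Set X, IsOpen V ∧ A ⊆ V ∧ ∀ x ∈ V, 1 ≤ u x), eBV μ u

/-- The lower approximate limit `u^∧(x)`. -/
def lowerApprox (μ : Measure X) (u : X → ℝ) (x : X) : EReal :=
  sSup ((fun s : ℝ => (s : EReal)) ''
    {s | Tendsto (fun r : ℝ => μ (ball x r ∩ {y | u y < s}) / μ (ball x r)) (𝓝[>] 0) (𝓝 0)})

/-- The support of a (μ-a.e. defined) function `u`. -/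
def suppOf (μ : Measure X) (u : X → ℝ) : Set X :=
  {x | ∀ r : ℝ, 0 < r → 0 < μ ({y | u y ≠ 0} ∩ ball x r)}

/-- the set of points of positive codimension one Hausdorff measure
is Borel. -/
theorem measurableSet_codimH_singleton_pos {X : Type u} [MetricSpace X] [CompleteSpace X] [Nontrivial X]
    [MeasurableSpace X] [BorelSpace X] (μ : Measure X)
    (Cd : ℝ≥0∞) (hCd : 1 ≤ Cd) (hdoub : IsDoubling μ Cd) :
    MeasurableSet {x : X | 0 < codimH μ ({x} : Set X)} := by
  have husc : ∀ R : ℝ, UpperSemicontinuous (fun x => codimHContent μ R ({x} : Set X)) := by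
    intro R x y hy
    simp only [codimHContent] at hy
    obtain ⟨c, hc⟩ := iInf_lt_iff.mp hy
    obtain ⟨h1, hc⟩ := iInf_lt_iff.mp hc
    obtain ⟨h2, hc⟩ := iInf_lt_iff.mp hc
    obtain ⟨i, hxi⟩ := Set.mem_iUnion.mp (h1 (Set.mem_singleton x))
    filter_upwards [isOpen_ball.mem_nhds hxi] with x' hx'
    calc codimHContent μ R ({x'} : Set X)
        ≤ ∑' i, μ (ball (c i).1 (c i).2) / ENNReal.ofReal (c i).2 := by
          refine iInf_le_of_le c (iInf_le_of_le ?_ (iInf_le _ h2))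
          exact Set.singleton_subset_iff.mpr (Set.mem_iUnion.mpr ⟨i, hx'⟩)
      _ < y := hc
  have hanti : ∀ {R₁ R₂ : ℝ}, R₁ ≤ R₂ → ∀ x : X,
      codimHContent μ R₂ ({x} : Set X) ≤ codimHContent μ R₁ ({x} : Set X) := by
    intro R₁ R₂ h x
    refine le_iInf fun c => le_iInf fun h1 => le_iInf fun h2 => ?_
    exact iInf_le_of_le c (iInf_le_of_le h1 (iInf_le _ fun i => (h2 i).trans h))
  have hset : {x : X | 0 < codimH μ ({x} : Set X)} =
      ⋃ n : ℕ, {x : X | 0 < codimHContent μ (1 / (n + 1)) ({x} : Set X)} := by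
    ext x
    simp only [Set.mem_setOf_eq, Set.mem_iUnion, codimH, lt_iSup_iff]
    constructor
    · rintro ⟨R, hR⟩
      obtain ⟨hR0, hpos⟩ := hR
      obtain ⟨n, hn⟩ := exists_nat_one_div_lt hR0
      exact ⟨n, lt_of_lt_of_le hpos (hanti hn.le x)⟩
    · rintro ⟨n, hn⟩
      exact ⟨1 / (n + 1), by positivity, hn⟩
  rw [hset]
  refine MeasurableSet.iUnion fun n => ?_
  exact measurableSet_lt measurable_const (husc _).measurable

end
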